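/- arXiv:1507.07094 — 4 statements merged into one kernel-verified Lean document; each statement's English description precedes it below -/
import Mathlib

section
/- If |x| is majorized by |x̃| for nonzero vectors x, x̃ ∈ ℝ^p (where |x| denotes the vector of absolute values), then for any q ∈ (0,1) ∪ (1,∞), s_q(x) ≥ s_q(x̃); i.e., s_q is Schur concave on the nonnegative orthant minus the origin. -/
open Finset

/-- Sum of the `k` largest entries of `u`, as a supremum over size-`k` subsets. -/
noncomputable def topSum {p : ℕ} (u : Fin p → ℝ) (k : ℕ) : ℝ :=
  sSup {s : ℝ | ∃ S : Finset (Fin p), S.card = k ∧ s = ∑ i ∈ S, u i}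

/-- `u` is majorized by `v`. -/
def Majorizes {p : ℕ} (u v : Fin p → ℝ) : Prop :=
  (∀ k : ℕ, topSum u k ≤ topSum v k) ∧ (∑ i, u i = ∑ i, v i)


lemma abel_aux (c D : ℕ → ℝ) (hc : ∀ i, c (i+1) ≤ c i) (hD : ∀ k, 0 ≤ D k) (hD0 : D 0 = 0) :
    ∀ n, c n * D n ≤ ∑ i ∈ Finset.range n, c i * (D (i+1) - D i) := by
  intro n
  induction n with
  | zero => simp [hD0]
  | succ n ih =>
    rw [Finset.sum_range_succ]
    nlinarith [mul_le_mul_of_nonneg_right (hc n) (hD (n+1)), ih]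

lemma tangent_convex {q x y : ℝ} (hq : 1 < q) (hx : 0 ≤ x) (hy : 0 ≤ y) :
    x ^ q + q * x ^ (q-1) * (y - x) ≤ y ^ q := by
  rcases hx.eq_or_lt with h | h
  · subst h
    rw [Real.zero_rpow (by positivity), Real.zero_rpow (by linarith : q - 1 ≠ 0)]
    · simpa using Real.rpow_nonneg hy q
  · have hs : -1 ≤ y / x - 1 := by
      have : 0 ≤ y / x := div_nonneg hy h.le
      linarith
    have hb := one_add_mul_self_le_rpow_one_add hs hq.le
    have h1 : 1 + (y / x - 1) = y / x := by ring
    rw [h1, Real.div_rpow hy h.le] at hb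
    have hxq : (0:ℝ) < x ^ q := Real.rpow_pos_of_pos h q
    have h2 : x ^ q * (y ^ q / x ^ q) = y ^ q := by field_simp
    have h3 : x ^ (q - 1) = x ^ q / x := by
      rw [Real.rpow_sub h, Real.rpow_one]
    have := mul_le_mul_of_nonneg_left hb hxq.le
    rw [mul_add, h2] at this
    calc x ^ q + q * x ^ (q-1) * (y - x) = x ^ q * 1 + x ^ q * (q * (y / x - 1)) := by
          rw [h3]; field_simp
      _ ≤ y ^ q := this

lemma tangent_concave {q x y : ℝ} (hq0 : 0 < q) (hq1 : q < 1) (hx : 0 < x) (hy : 0 ≤ y) :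
    y ^ q ≤ x ^ q + q * x ^ (q-1) * (y - x) := by
  have hs : -1 ≤ y / x - 1 := by
    have : 0 ≤ y / x := div_nonneg hy hx.le
    linarith
  have hb := rpow_one_add_le_one_add_mul_self hs hq0.le hq1.le
  have h1 : 1 + (y / x - 1) = y / x := by ring
  rw [h1, Real.div_rpow hy hx.le] at hb
  have hxq : (0:ℝ) < x ^ q := Real.rpow_pos_of_pos hx q
  have h2 : x ^ q * (y ^ q / x ^ q) = y ^ q := by field_simp
  have h3 : x ^ (q - 1) = x ^ q / x := by
    rw [Real.rpow_sub hx, Real.rpow_one]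
  have := mul_le_mul_of_nonneg_left hb hxq.le
  rw [h2, mul_add] at this
  calc y ^ q ≤ x ^ q * 1 + x ^ q * (q * (y / x - 1)) := this
    _ = x ^ q + q * x ^ (q-1) * (y - x) := by rw [h3]; field_simp

lemma hlp_sum (p : ℕ) (a b c : ℕ → ℝ) (φ : ℝ → ℝ)
    (hc : ∀ i, c (i+1) ≤ c i)
    (hpart : ∀ k, k ≤ p → ∑ i ∈ range k, a i ≤ ∑ i ∈ range k, b i)
    (htot : ∑ i ∈ range p, a i = ∑ i ∈ range p, b i)
    (hsub : ∀ i, i < p → c i * (b i - a i) ≤ φ (b i) - φ (a i)) :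
    ∑ i ∈ range p, φ (a i) ≤ ∑ i ∈ range p, φ (b i) := by
  set D : ℕ → ℝ := fun k => ∑ i ∈ range (min k p), (b i - a i) with hDdef
  have hD0 : D 0 = 0 := by simp [hDdef]
  have hDnn : ∀ k, 0 ≤ D k := by
    intro k
    have := hpart (min k p) (min_le_right _ _)
    simp only [hDdef, Finset.sum_sub_distrib]
    linarith
  have hDp : D p = 0 := by simp [hDdef, Finset.sum_sub_distrib, htot]
  have hstep : ∀ i, i < p → D (i+1) - D i = b i - a i := by
    intro i hi
    have h1 : min (i+1) p = i + 1 := min_eq_left hi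
    have h2 : min i p = i := min_eq_left hi.le
    simp only [hDdef, h1, h2, Finset.sum_range_succ]
    ring
  have key : (0:ℝ) ≤ ∑ i ∈ range p, c i * (b i - a i) := by
    have h := abel_aux c D hc hDnn hD0 p
    rw [hDp, mul_zero] at h
    refine h.trans_eq (Finset.sum_congr rfl fun i hi => ?_)
    rw [hstep i (Finset.mem_range.mp hi)]
  have h2 : ∑ i ∈ range p, c i * (b i - a i) ≤ ∑ i ∈ range p, (φ (b i) - φ (a i)) :=
    Finset.sum_le_sum fun i hi => hsub i (Finset.mem_range.mp hi)
  have := key.trans h2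
  rw [Finset.sum_sub_distrib] at this
  linarith

lemma sorted_subset_bound {p k : ℕ} (v : ℕ → ℝ) (hmono : ∀ i j, i ≤ j → v j ≤ v i)
    (T : Finset (Fin p)) (h : T.card = k) :
    ∑ j ∈ T, v (j : ℕ) ≤ ∑ i ∈ range k, v i := by
  classical
  set f := T.orderEmbOfFin h with hf
  have himg : T = Finset.image (fun i => f i) Finset.univ := by
    ext x
    simp only [Finset.mem_image, Finset.mem_univ, true_and]
    constructor
    · intro hx
      have : x ∈ Set.range f := by rw [Finset.range_orderEmbOfFin]; exact hx
      obtain ⟨i, hi⟩ := this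
      exact ⟨i, hi⟩
    · rintro ⟨i, rfl⟩; exact Finset.orderEmbOfFin_mem T h i
  have hinj : ∀ i ∈ (Finset.univ : Finset (Fin k)), ∀ j ∈ Finset.univ, f i = f j → i = j :=
    fun i _ j _ hij => f.injective hij
  have hle : ∀ i : Fin k, (i : ℕ) ≤ (f i : ℕ) := by
    intro i
    set g : ℕ → ℕ := fun n => if hn : n < k then (f ⟨n, hn⟩ : ℕ) else n + p with hg
    have hgs : StrictMono g := by
      intro m n hmn
      simp only [hg]
      by_cases hn : n < k
      · have hm : m < k := hmn.trans hn
        rw [dif_pos hm, dif_pos hn]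
        exact_mod_cast f.strictMono (show (⟨m, hm⟩ : Fin k) < ⟨n, hn⟩ from hmn)
      · by_cases hm : m < k
        · rw [dif_pos hm, dif_neg hn]
          exact (f ⟨m, hm⟩).2.trans_le (Nat.le_add_left p n)
        · rw [dif_neg hm, dif_neg hn]
          omega
    have h1 := hgs.le_apply (x := (i : ℕ))
    have h2 : g (i : ℕ) = (f i : ℕ) := by simp [hg, i.2]
    rwa [h2] at h1
  calc ∑ j ∈ T, v (j : ℕ) = ∑ i : Fin k, v ((f i : Fin p) : ℕ) := by
        rw [himg, Finset.sum_image hinj]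
    _ ≤ ∑ i : Fin k, v (i : ℕ) := Finset.sum_le_sum fun i _ => hmono _ _ (hle i)
    _ = ∑ i ∈ range k, v i := Fin.sum_univ_eq_sum_range _ _

lemma exists_sorted (p : ℕ) (u : Fin p → ℝ) (hu : ∀ i, 0 ≤ u i) :
    ∃ v : ℕ → ℝ,
      (∀ i, 0 ≤ v i) ∧
      (∀ i j, i ≤ j → v j ≤ v i) ∧
      (∀ i, p ≤ i → v i = 0) ∧
      (∃ e : Equiv.Perm (Fin p), ∀ i : Fin p, v (i : ℕ) = u (e i)) ∧
      (∀ T : Finset (Fin p), ∑ i ∈ T, u i ≤ ∑ i ∈ range T.card, v i) ∧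
      (∀ k, k ≤ p → topSum u k = ∑ i ∈ range k, v i) := by
  classical
  set σ := Tuple.sort u with hσ
  set τ : Equiv.Perm (Fin p) := Fin.revPerm.trans σ with hτ
  set v : ℕ → ℝ := fun n => if hn : n < p then u (τ ⟨n, hn⟩) else 0 with hv
  have hvperm : ∀ i : Fin p, v (i : ℕ) = u (τ i) := by
    intro i; simp only [hv, dif_pos i.2, Fin.eta]
  have hvnn : ∀ i, 0 ≤ v i := by
    intro i; simp only [hv]
    split
    · exact hu _
    · exact le_refl _
  have hvmono : ∀ i j : ℕ, i ≤ j → v j ≤ v i := by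
    intro i j hij
    by_cases hj : j < p
    · have hi : i < p := lt_of_le_of_lt hij hj
      simp only [hv, dif_pos hi, dif_pos hj]
      have hrev : Fin.rev (⟨j, hj⟩ : Fin p) ≤ Fin.rev (⟨i, hi⟩ : Fin p) := by
        rw [Fin.rev_le_rev]
        exact hij
      have := Tuple.monotone_sort u hrev
      simpa [hτ, Function.comp] using this
    · simp only [hv, dif_neg hj]
      exact hvnn i
  have hvzero : ∀ i, p ≤ i → v i = 0 := by
    intro i hi; simp [hv, Nat.not_lt.mpr hi]
  have hbound : ∀ T : Finset (Fin p), ∑ i ∈ T, u i ≤ ∑ i ∈ range T.card, v i := by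
    intro T
    have h1 : ∑ i ∈ T, u i = ∑ j ∈ T.map τ.symm.toEmbedding, v (j : ℕ) := by
      rw [Finset.sum_map]
      refine Finset.sum_congr rfl fun x _ => ?_
      rw [hvperm]
      simp
    have h2 : (T.map τ.symm.toEmbedding).card = T.card := Finset.card_map _
    rw [h1, ← h2]
    exact sorted_subset_bound v hvmono _ rfl
  have htop : ∀ k, k ≤ p → topSum u k = ∑ i ∈ range k, v i := by
    intro k hk
    have hmem : (∑ i ∈ range k, v i) ∈
        {s : ℝ | ∃ S : Finset (Fin p), S.card = k ∧ s = ∑ i ∈ S, u i} := by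
      refine ⟨(Finset.univ : Finset (Fin k)).map
        ((Fin.castLEEmb hk).trans τ.toEmbedding), ?_, ?_⟩
      · rw [Finset.card_map, Finset.card_univ, Fintype.card_fin]
      · rw [Finset.sum_map]
        rw [← Fin.sum_univ_eq_sum_range v k]
        refine Finset.sum_congr rfl fun i _ => ?_
        have : ((Fin.castLEEmb hk).trans τ.toEmbedding) i = τ (Fin.castLE hk i) := rfl
        rw [this, ← hvperm]
        simp
    have hub : ∀ s ∈ {s : ℝ | ∃ S : Finset (Fin p), S.card = k ∧ s = ∑ i ∈ S, u i},
        s ≤ ∑ i ∈ range k, v i := by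
      rintro s ⟨S, hS, rfl⟩
      have := hbound S
      rwa [hS] at this
    exact IsGreatest.csSup_eq ⟨hmem, hub⟩
  exact ⟨v, hvnn, hvmono, hvzero, ⟨τ, hvperm⟩, hbound, htop⟩

theorem sq_schur_concave (p : ℕ) (x xt : Fin p → ℝ) (hx : x ≠ 0) (hxt : xt ≠ 0)
    (hmaj : Majorizes (fun i => |x i|) (fun i => |xt i|))
    (q : ℝ) (hq0 : 0 < q) (hq1 : q ≠ 1) :
    ((∑ i, |xt i| ^ q) ^ (1/q) / (∑ i, |xt i|)) ^ (q / (1 - q)) ≤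
    ((∑ i, |x i| ^ q) ^ (1/q) / (∑ i, |x i|)) ^ (q / (1 - q)) := by
  classical
  set a : Fin p → ℝ := fun i => |x i| with ha
  set b : Fin p → ℝ := fun i => |xt i| with hb
  have hann : ∀ i, 0 ≤ a i := fun i => abs_nonneg _
  have hbnn : ∀ i, 0 ≤ b i := fun i => abs_nonneg _
  obtain ⟨va, hva_nn, hva_mono, hva_zero, ⟨ea, hva_perm⟩, hva_bd, hva_top⟩ :=
    exists_sorted p a hann
  obtain ⟨vb, hvb_nn, hvb_mono, hvb_zero, ⟨eb, hvb_perm⟩, hvb_bd, hvb_top⟩ :=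
    exists_sorted p b hbnn
  -- transfer sums through the permutation
  have sum_eq_a : ∀ φ : ℝ → ℝ, ∑ i ∈ range p, φ (va i) = ∑ i, φ (a i) := by
    intro φ
    rw [← Fin.sum_univ_eq_sum_range (fun n => φ (va n)) p]
    rw [show (∑ i : Fin p, φ (va (i : ℕ))) = ∑ i : Fin p, φ (a (ea i)) from
      Finset.sum_congr rfl fun i _ => by rw [hva_perm i]]
    exact Equiv.sum_comp ea (fun i => φ (a i))
  have sum_eq_b : ∀ φ : ℝ → ℝ, ∑ i ∈ range p, φ (vb i) = ∑ i, φ (b i) := by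
    intro φ
    rw [← Fin.sum_univ_eq_sum_range (fun n => φ (vb n)) p]
    rw [show (∑ i : Fin p, φ (vb (i : ℕ))) = ∑ i : Fin p, φ (b (eb i)) from
      Finset.sum_congr rfl fun i _ => by rw [hvb_perm i]]
    exact Equiv.sum_comp eb (fun i => φ (b i))
  show ((∑ i, b i ^ q) ^ (1/q) / (∑ i, b i)) ^ (q / (1 - q)) ≤
    ((∑ i, a i ^ q) ^ (1/q) / (∑ i, a i)) ^ (q / (1 - q))
  have hsum_ab : ∑ i, a i = ∑ i, b i := hmaj.2
  have hpart : ∀ k, k ≤ p → ∑ i ∈ range k, va i ≤ ∑ i ∈ range k, vb i := by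
    intro k hk
    rw [← hva_top k hk, ← hvb_top k hk]
    exact hmaj.1 k
  have htot : ∑ i ∈ range p, va i = ∑ i ∈ range p, vb i := by
    have h1 := sum_eq_a (fun t => t)
    have h2 := sum_eq_b (fun t => t)
    rw [h1, h2]; exact hsum_ab
  -- positivity data
  obtain ⟨i0, hi0⟩ := Function.ne_iff.mp hx
  obtain ⟨j0, hj0⟩ := Function.ne_iff.mp hxt
  have ha0 : 0 < a i0 := abs_pos.mpr hi0
  have hb0 : 0 < b j0 := abs_pos.mpr hj0
  have hp : 0 < p := i0.pos
  have hSa : 0 < ∑ i, a i :=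
    Finset.sum_pos' (fun i _ => hann i) ⟨i0, Finset.mem_univ _, ha0⟩
  have hSb : 0 < ∑ i, b i := hsum_ab ▸ hSa
  have hNa : 0 < ∑ i, a i ^ q :=
    Finset.sum_pos' (fun i _ => Real.rpow_nonneg (hann i) q)
      ⟨i0, Finset.mem_univ _, Real.rpow_pos_of_pos ha0 q⟩
  have hNb : 0 < ∑ i, b i ^ q :=
    Finset.sum_pos' (fun i _ => Real.rpow_nonneg (hbnn i) q)
      ⟨j0, Finset.mem_univ _, Real.rpow_pos_of_pos hb0 q⟩
  have hva0 : 0 < va 0 := by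
    have h := hva_bd {i0}
    rw [Finset.sum_singleton, Finset.card_singleton, Finset.sum_range_one] at h
    exact lt_of_lt_of_le ha0 h
  -- zeros propagate
  have hzero : ∀ k, k < p → va k = 0 → vb k = 0 := by
    intro k hk h0
    have hIa : ∑ i ∈ Finset.Ico k p, va i = 0 :=
      Finset.sum_eq_zero fun i hi => le_antisymm
        ((hva_mono k i (Finset.mem_Ico.mp hi).1).trans_eq h0) (hva_nn i)
    have hsplit_a : ∑ i ∈ range k, va i + ∑ i ∈ Finset.Ico k p, va i
        = ∑ i ∈ range p, va i := by
      rw [Finset.range_eq_Ico, Finset.range_eq_Ico]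
      exact Finset.sum_Ico_consecutive _ (Nat.zero_le k) hk.le
    have hsplit_b : ∑ i ∈ range k, vb i + ∑ i ∈ Finset.Ico k p, vb i
        = ∑ i ∈ range p, vb i := by
      rw [Finset.range_eq_Ico, Finset.range_eq_Ico]
      exact Finset.sum_Ico_consecutive _ (Nat.zero_le k) hk.le
    have hIb : ∑ i ∈ Finset.Ico k p, vb i ≤ 0 := by
      have := hpart k hk.le
      linarith [htot, hsplit_a, hsplit_b, hIa]
    have hIb0 : ∑ i ∈ Finset.Ico k p, vb i = 0 :=
      le_antisymm hIb (Finset.sum_nonneg fun i _ => hvb_nn i)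
    have := (Finset.sum_eq_zero_iff_of_nonneg (fun i _ => hvb_nn i)).mp hIb0
    exact this k (Finset.mem_Ico.mpr ⟨le_refl k, hk⟩)
  rcases lt_or_gt_of_ne hq1 with hqlt | hqgt
  · -- 0 < q < 1 : need ∑ b^q ≤ ∑ a^q, exponent nonneg
    -- minimum positive sorted value of va
    set J : Finset ℕ := (range p).filter (fun i => 0 < va i) with hJ
    have hJne : J.Nonempty := ⟨0, Finset.mem_filter.mpr ⟨Finset.mem_range.mpr hp, hva0⟩⟩
    set jm := J.max' hJne with hjm
    set m := va jm with hm
    have hm0 : 0 < m := (Finset.mem_filter.mp (J.max'_mem hJne)).2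
    have hmle : ∀ i, 0 < va i → m ≤ va i := by
      intro i hi
      by_cases hip : i < p
      · have hiJ : i ∈ J := Finset.mem_filter.mpr ⟨Finset.mem_range.mpr hip, hi⟩
        exact hva_mono i jm (J.le_max' i hiJ)
      · exact absurd (hva_zero i (Nat.le_of_not_lt hip)) hi.ne'
    set c : ℕ → ℝ := fun i => -(q * (max (va i) m) ^ (q - 1)) with hc_def
    have hc : ∀ i, c (i+1) ≤ c i := by
      intro i
      have h1 : 0 < max (va (i+1)) m := lt_max_of_lt_right hm0
      have h2 : max (va (i+1)) m ≤ max (va i) m :=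
        max_le_max (hva_mono i (i+1) (Nat.le_succ i)) le_rfl
      have := Real.rpow_le_rpow_of_nonpos h1 h2 (by linarith : q - 1 ≤ 0)
      simp only [hc_def, neg_le_neg_iff]
      exact mul_le_mul_of_nonneg_left this hq0.le
    have hsub : ∀ i, i < p →
        c i * (vb i - va i) ≤ (fun t => -(t ^ q)) (vb i) - (fun t => -(t ^ q)) (va i) := by
      intro i hi
      simp only
      by_cases hvai : 0 < va i
      · have hmax : max (va i) m = va i := max_eq_left (hmle i hvai)
        have := tangent_concave hq0 hqlt hvai (hvb_nn i)
        simp only [hc_def, hmax]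
        nlinarith
      · have h0 : va i = 0 := le_antisymm (not_lt.mp hvai) (hva_nn i)
        have hb0' : vb i = 0 := hzero i hi h0
        rw [h0, hb0', Real.zero_rpow hq0.ne']
        simp
    have hkey := hlp_sum p va vb c (fun t => -(t ^ q)) hc hpart htot hsub
    have hkey2 : ∑ i, b i ^ q ≤ ∑ i, a i ^ q := by
      have h1 := sum_eq_a (fun t => -(t ^ q))
      have h2 := sum_eq_b (fun t => -(t ^ q))
      simp only [Finset.sum_neg_distrib] at h1 h2 hkey
      linarith
    have he : 0 ≤ q / (1 - q) := div_nonneg hq0.le (by linarith)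
    have hnum : (∑ i, b i ^ q) ^ (1/q) ≤ (∑ i, a i ^ q) ^ (1/q) :=
      Real.rpow_le_rpow hNb.le hkey2 (by positivity)
    have hbase : (∑ i, b i ^ q) ^ (1/q) / (∑ i, b i) ≤ (∑ i, a i ^ q) ^ (1/q) / (∑ i, a i) := by
      rw [← hsum_ab]
      exact (div_le_div_iff_of_pos_right hSa).mpr hnum
    exact Real.rpow_le_rpow (by positivity) hbase he
  · -- 1 < q : need ∑ a^q ≤ ∑ b^q, exponent nonpos
    set c : ℕ → ℝ := fun i => q * va i ^ (q - 1) with hc_def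
    have hc : ∀ i, c (i+1) ≤ c i := by
      intro i
      have := Real.rpow_le_rpow (hva_nn (i+1)) (hva_mono i (i+1) (Nat.le_succ i))
        (by linarith : (0:ℝ) ≤ q - 1)
      exact mul_le_mul_of_nonneg_left this hq0.le
    have hsub : ∀ i, i < p →
        c i * (vb i - va i) ≤ (fun t => t ^ q) (vb i) - (fun t => t ^ q) (va i) := by
      intro i hi
      have := tangent_convex hqgt (hva_nn i) (hvb_nn i)
      simp only [hc_def]
      nlinarith
    have hkey := hlp_sum p va vb c (fun t => t ^ q) hc hpart htot hsub
    have hkey2 : ∑ i, a i ^ q ≤ ∑ i, b i ^ q := by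
      have h1 := sum_eq_a (fun t => t ^ q)
      have h2 := sum_eq_b (fun t => t ^ q)
      linarith
    have he : q / (1 - q) ≤ 0 :=
      div_nonpos_of_nonneg_of_nonpos hq0.le (by linarith)
    have hnum : (∑ i, a i ^ q) ^ (1/q) ≤ (∑ i, b i ^ q) ^ (1/q) :=
      Real.rpow_le_rpow hNa.le hkey2 (by positivity)
    have hbase : (∑ i, a i ^ q) ^ (1/q) / (∑ i, a i) ≤ (∑ i, b i ^ q) ^ (1/q) / (∑ i, b i) := by
      rw [← hsum_ab]
      exact (div_le_div_iff_of_pos_right hSa).mpr hnum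
    have hpos : 0 < (∑ i, a i ^ q) ^ (1/q) / (∑ i, a i) := by positivity
    exact Real.rpow_le_rpow_of_nonpos hpos hbase he
end

section
/- Let A ∈ ℝ^{n×p} with n < p, and let x° ∈ ℝ^p be arbitrary. Then there exists a nonzero vector x̃ ∈ ℝ^p with A x̃ = A x° and ‖x̃‖_1² / ‖x̃‖_2² ≥ (1/(πe)) · (1 − n/p)² · p. -/
open Finset Module RealInnerProductSpace

noncomputable def sgn (c : Bool) : ℝ := if c then 1 else -1

lemma update_update (p : ℕ) (c : Fin p → Bool) (i : Fin p) :
    Function.update (Function.update c i (!(c i))) i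
      (!(Function.update c i (!(c i)) i)) = c := by
  funext j
  rcases eq_or_ne j i with rfl | hj
  · simp [Function.update_self]
  · simp [Function.update_of_ne hj]

lemma sum_sgn_mul (p : ℕ) (i i' : Fin p) :
    ∑ c : Fin p → Bool, sgn (c i) * sgn (c i') = if i = i' then (2^p : ℝ) else 0 := by
  rcases eq_or_ne i i' with rfl | h
  · have : ∀ c : Fin p → Bool, sgn (c i) * sgn (c i) = 1 := by
      intro c; cases c i <;> simp [sgn]
    simp [this, Finset.card_univ]
  · rw [if_neg h]
    apply Finset.sum_involution (fun c _ => Function.update c i (!(c i)))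
    · intro c _
      have hi' : Function.update c i (!(c i)) i' = c i' := Function.update_of_ne (Ne.symm h) _ _
      have hi : Function.update c i (!(c i)) i = !(c i) := Function.update_self _ _ _
      rw [hi, hi']
      cases c i <;> cases c i' <;> simp [sgn] <;> ring
    · intro c _ _
      intro hc
      have := congrFun hc i
      rw [Function.update_self] at this
      cases hcc : c i <;> rw [hcc] at this <;> simp at this
    · intro c _; exact update_update p c i
    · intro c _; exact Finset.mem_univ _



lemma sum_sq_sign_dot (p : ℕ) (u : Fin p → ℝ) :
    ∑ c : Fin p → Bool, (∑ i, u i * sgn (c i))^2 = 2^p * ∑ i, (u i)^2 := by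
  have h1 : ∀ c : Fin p → Bool, (∑ i, u i * sgn (c i))^2
      = ∑ i, ∑ i', (u i * u i') * (sgn (c i) * sgn (c i')) := by
    intro c
    rw [sq, Finset.sum_mul_sum]
    exact Finset.sum_congr rfl fun i _ => Finset.sum_congr rfl fun i' _ => by ring
  calc ∑ c : Fin p → Bool, (∑ i, u i * sgn (c i))^2
      = ∑ c : Fin p → Bool, ∑ i, ∑ i', (u i * u i') * (sgn (c i) * sgn (c i')) :=
        Finset.sum_congr rfl fun c _ => h1 c
    _ = ∑ i, ∑ i', ∑ c : Fin p → Bool, (u i * u i') * (sgn (c i) * sgn (c i')) := by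
        rw [Finset.sum_comm]
        exact Finset.sum_congr rfl fun i _ => Finset.sum_comm
    _ = ∑ i, ∑ i', (u i * u i') * (if i = i' then (2^p : ℝ) else 0) := by
        refine Finset.sum_congr rfl fun i _ => Finset.sum_congr rfl fun i' _ => ?_
        rw [← Finset.mul_sum, sum_sgn_mul]
    _ = ∑ i, (u i * u i) * 2^p := by
        refine Finset.sum_congr rfl fun i _ => ?_
        simp
    _ = 2^p * ∑ i, (u i)^2 := by
        rw [Finset.mul_sum]
        exact Finset.sum_congr rfl fun i _ => by ring



lemma abs_sgn (c : Bool) : |sgn c| = 1 := by cases c <;> simp [sgn]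

set_option maxHeartbeats 2000000 in
lemma kernel_vector (n p : ℕ) (hnp : n < p) (A : Matrix (Fin n) (Fin p) ℝ) :
    ∃ y : Fin p → ℝ, A.mulVec y = 0 ∧ ((p : ℝ) - n) ≤ ∑ i, (y i)^2 ∧
      (∑ i, (y i)^2) ≤ ∑ i, |y i| := by
  classical
  let E := EuclideanSpace ℝ (Fin p)
  let f : E →ₗ[ℝ] (Fin n → ℝ) :=
    A.mulVecLin ∘ₗ (WithLp.linearEquiv 2 ℝ (Fin p → ℝ)).toLinearMap
  let K := LinearMap.ker f
  have hrank : p ≤ finrank ℝ K + n := by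
    have h1 : finrank ℝ (LinearMap.range f) + finrank ℝ K = finrank ℝ E :=
      LinearMap.finrank_range_add_finrank_ker f
    have h2 : finrank ℝ (LinearMap.range f) ≤ n := by
      simpa using Submodule.finrank_le (LinearMap.range f)
    have h3 : finrank ℝ E = p := by
      show finrank ℝ (EuclideanSpace ℝ (Fin p)) = p
      simp [finrank_euclideanSpace]
    omega
  let k := finrank ℝ K
  let b := stdOrthonormalBasis ℝ K
  let ε : (Fin p → Bool) → E := fun c => (WithLp.equiv 2 (Fin p → ℝ)).symm (fun i => sgn (c i))
  let coef : (Fin p → Bool) → Fin k → ℝ := fun c j => ⟪(b j : E), ε c⟫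
  have key : ∀ j : Fin k, ∑ c : Fin p → Bool, (coef c j)^2 = 2^p := by
    intro j
    have hnorm : ∑ i, ((b j : E) i)^2 = 1 := by
      have h1 : ⟪(b j : E), (b j : E)⟫ = ∑ i, ((b j : E) i) * ((b j : E) i) := by
        rw [PiLp.inner_apply]; simp only [RCLike.inner_apply, conj_trivial]
      have h2 : ‖(b j : E)‖ = 1 := by
        have := b.orthonormal.1 j
        exact this
      have h3 : ⟪(b j : E), (b j : E)⟫ = 1 := by
        rw [real_inner_self_eq_norm_sq, h2]; norm_num
      rw [h1] at h3
      rw [← h3]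
      exact Finset.sum_congr rfl fun i _ => sq _
    have hc : ∀ c, coef c j = ∑ i, ((b j : E) i) * sgn (c i) := by
      intro c
      simp [coef, ε, PiLp.inner_apply, RCLike.inner_apply, conj_trivial, E]
      exact Finset.sum_congr rfl fun i _ => mul_comm _ _
    calc ∑ c : Fin p → Bool, (coef c j)^2
        = ∑ c : Fin p → Bool, (∑ i, ((b j : E) i) * sgn (c i))^2 :=
          Finset.sum_congr rfl fun c _ => by rw [hc c]
      _ = 2^p * ∑ i, ((b j : E) i)^2 := sum_sq_sign_dot p _
      _ = 2^p := by rw [hnorm, mul_one]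
  have hex : ∃ c : Fin p → Bool, (k : ℝ) ≤ ∑ j, (coef c j)^2 := by
    by_contra h
    push_neg at h
    have hlt : ∑ c : Fin p → Bool, ∑ j, (coef c j)^2 <
        ∑ _c : Fin p → Bool, (k : ℝ) :=
      Finset.sum_lt_sum_of_nonempty Finset.univ_nonempty fun c _ => h c
    have heq : ∑ c : Fin p → Bool, ∑ j, (coef c j)^2 = (2^p : ℝ) * k := by
      rw [Finset.sum_comm]
      rw [Finset.sum_congr rfl fun j _ => key j]
      simp [mul_comm]
    rw [heq, Finset.sum_const, Finset.card_univ] at hlt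
    simp only [Fintype.card_fun, Fintype.card_bool, Fintype.card_fin, nsmul_eq_mul] at hlt
    push_cast at hlt
    linarith
  obtain ⟨c, hc⟩ := hex
  let y0 : K := ∑ j, coef c j • b j
  let y : Fin p → ℝ := fun i => (y0 : E) i
  set t := ∑ j, (coef c j)^2 with ht
  have hyy : ∑ i, (y i)^2 = t := by
    have h1 : ⟪(y0 : E), (y0 : E)⟫ = ∑ i, (y i) * (y i) := by
      rw [PiLp.inner_apply]; simp only [RCLike.inner_apply, conj_trivial]
      exact Finset.sum_congr rfl fun i _ => by ring
    have h2 : (y0 : E) = ∑ j, coef c j • ((b j : K) : E) := by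
      simp [y0, Submodule.coe_sum]
    have h3 : ⟪(y0 : E), (y0 : E)⟫ = ∑ j, coef c j * ⟪(y0 : E), (b j : E)⟫ := by
      nth_rewrite 2 [h2]
      rw [inner_sum]
      exact Finset.sum_congr rfl fun j _ => real_inner_smul_right _ _ _
    have h4 : ∀ j, ⟪(y0 : E), (b j : E)⟫ = coef c j := by
      intro j
      rw [h2, sum_inner]
      have : ∀ l, ⟪coef c l • ((b l : K) : E), (b j : E)⟫ =
          coef c l * ⟪(b l : E), (b j : E)⟫ := fun l => real_inner_smul_left _ _ _
      rw [Finset.sum_congr rfl fun l _ => this l]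
      have horth : ∀ l, ⟪(b l : E), (b j : E)⟫ = if l = j then 1 else 0 := by
        intro l
        rcases eq_or_ne l j with rfl | hlj
        · rw [if_pos rfl, real_inner_self_eq_norm_sq]
          have := b.orthonormal.1 l
          have h2 : ‖(b l : E)‖ = 1 := by exact this
          rw [h2]; norm_num
        · rw [if_neg hlj]
          have := b.orthonormal.2 hlj
          have h0 : ⟪(b l : K), (b j : K)⟫ = 0 := this
          rw [Submodule.coe_inner] at h0
          exact h0
      rw [Finset.sum_congr rfl fun l _ => by rw [horth l]]
      simp [coef]
    have h5 : (∑ i, (y i)^2) = ∑ i, y i * y i := Finset.sum_congr rfl fun i _ => sq _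
    have h6 : ⟪(y0 : E), (y0 : E)⟫ = t := by
      rw [h3, ht]
      exact Finset.sum_congr rfl fun j _ => by rw [h4 j, sq]
    rw [h5, ← h1, h6]
  have hsy : ∑ i, sgn (c i) * y i = t := by
    have h1 : ⟪ε c, (y0 : E)⟫ = ∑ i, sgn (c i) * y i := by
      simp [PiLp.inner_apply, RCLike.inner_apply, conj_trivial,
        ε, y, E]
      exact Finset.sum_congr rfl fun i _ => mul_comm _ _
    have h2 : (y0 : E) = ∑ j, coef c j • ((b j : K) : E) := by
      simp [y0, Submodule.coe_sum]
    have h3 : ⟪ε c, (y0 : E)⟫ = ∑ j, coef c j * ⟪ε c, (b j : E)⟫ := by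
      rw [h2, inner_sum]
      exact Finset.sum_congr rfl fun j _ => real_inner_smul_right _ _ _
    have h4 : ∀ j, ⟪ε c, (b j : E)⟫ = coef c j := fun j => real_inner_comm _ _
    rw [← h1, h3, ht]
    exact Finset.sum_congr rfl fun j _ => by rw [h4 j, sq]
  refine ⟨y, ?_, ?_, ?_⟩
  · have hmem : (y0 : E) ∈ K := y0.2
    rw [LinearMap.mem_ker] at hmem
    have heq : f (y0 : E) = A.mulVec y := by
      show A.mulVecLin ((WithLp.linearEquiv 2 ℝ (Fin p → ℝ)) (y0 : E)) = A.mulVec y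
      rw [Matrix.mulVecLin_apply]
      congr 1
    rw [← heq]
    exact hmem
  · rw [hyy]
    have hk : ((p : ℝ) - n) ≤ (k : ℝ) := by
      have : (p : ℝ) ≤ (k : ℝ) + n := by exact_mod_cast hrank
      linarith
    linarith [hc]
  · rw [hyy, ← hsy]
    apply Finset.sum_le_sum
    intro i _
    calc sgn (c i) * y i ≤ |sgn (c i) * y i| := le_abs_self _
      _ = |y i| := by rw [abs_mul, abs_sgn, one_mul]

set_option maxHeartbeats 1000000 in
theorem exists_dense_in_fiber_s2 (n p : ℕ) (hnp : n < p) (A : Matrix (Fin n) (Fin p) ℝ)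
    (x0 : Fin p → ℝ) :
    ∃ xt : Fin p → ℝ, xt ≠ 0 ∧ A.mulVec xt = A.mulVec x0 ∧
      (∑ i, |xt i|) ^ 2 / (∑ i, (xt i) ^ 2) ≥
        (1 / (Real.pi * Real.exp 1)) * (1 - (n : ℝ) / p) ^ 2 * p := by
  obtain ⟨y, hAy, hky, hby⟩ := kernel_vector n p hnp A
  have hp0 : (0:ℝ) < p := by
    have : 0 < p := by omega
    exact_mod_cast this
  set k' : ℝ := (p : ℝ) - n with hk'
  have hk1 : (1:ℝ) ≤ k' := by
    have : (n:ℝ) + 1 ≤ p := by exact_mod_cast hnp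
    rw [hk']; linarith
  set b := ∑ i, (y i)^2 with hbdef
  set a := ∑ i, |y i| with hadef
  have hb : k' ≤ b := hky
  have hab : b ≤ a := hby
  have hb0 : (0:ℝ) < b := lt_of_lt_of_le one_pos (le_trans hk1 hb)
  have ha0 : (0:ℝ) < a := lt_of_lt_of_le hb0 hab
  set c1 := ∑ i, |x0 i| with hc1def
  set c2 := ∑ i, (x0 i)^2 with hc2def
  have hc1 : 0 ≤ c1 := Finset.sum_nonneg fun i _ => abs_nonneg _
  have hc2 : 0 ≤ c2 := Finset.sum_nonneg fun i _ => sq_nonneg _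
  set C := (1 / (Real.pi * Real.exp 1)) * (1 - (n : ℝ) / p) ^ 2 * p with hCdef
  have hC0 : 0 ≤ C := by
    rw [hCdef]
    have h1 : (0:ℝ) < Real.pi * Real.exp 1 := by positivity
    positivity
  have hC : C ≤ k' / 8 := by
    have hpi : (8:ℝ) ≤ Real.pi * Real.exp 1 := by
      nlinarith [Real.pi_gt_three, Real.exp_one_gt_d9]
    have h1 : 1/(Real.pi * Real.exp 1) ≤ 1/8 := by
      apply one_div_le_one_div_of_le <;> norm_num
      linarith
    have hq0 : 0 ≤ 1 - (n:ℝ)/p := by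
      rw [sub_nonneg, div_le_one hp0]
      exact_mod_cast hnp.le
    have hsq : (1 - (n:ℝ)/p)^2 ≤ 1 - (n:ℝ)/p := by nlinarith [div_nonneg (Nat.cast_nonneg n : (0:ℝ) ≤ n) hp0.le]
    have h2 : (1 - (n:ℝ)/p) * p = k' := by
      rw [hk']; field_simp
    have step1 : C ≤ (1/8) * ((1 - (n:ℝ)/p)^2 * p) := by
      rw [hCdef, mul_assoc]
      apply mul_le_mul_of_nonneg_right h1
      positivity
    have step2 : (1 - (n:ℝ)/p)^2 * p ≤ (1-(n:ℝ)/p) * p :=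
      mul_le_mul_of_nonneg_right hsq hp0.le
    linarith
  have hkb : (0:ℝ) < k' * b := mul_pos (lt_of_lt_of_le one_pos hk1) hb0
  set t := (c1+1)/a + Real.sqrt ((c1^2 + 2*C*c2) * 4 / (k'*b)) with htdef
  clear_value t
  clear_value k' b a c1 c2 C
  have ht0 : 0 ≤ t := by
    rw [htdef]
    have := Real.sqrt_nonneg ((c1^2 + 2*C*c2) * 4 / (k'*b))
    have : 0 ≤ (c1+1)/a := by positivity
    positivity
  have hta : c1 + 1 ≤ t * a := by
    have h1 : (c1+1)/a ≤ t := by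
      rw [htdef]; exact le_add_of_nonneg_right (Real.sqrt_nonneg _)
    calc c1 + 1 = ((c1+1)/a) * a := (div_mul_cancel₀ _ ha0.ne').symm
      _ ≤ t * a := mul_le_mul_of_nonneg_right h1 ha0.le
  have ht2 : c1^2 + 2*C*c2 ≤ t^2 * (k'*b/4) := by
    set X := (c1^2 + 2*C*c2) * 4 / (k'*b) with hX
    have hnum : 0 ≤ (c1^2 + 2*C*c2) * 4 := by positivity
    have hX0 : 0 ≤ X := div_nonneg hnum hkb.le
    have h1 : Real.sqrt X ≤ t := by
      rw [htdef]
      apply le_add_of_nonneg_left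
      positivity
    have h2 : X ≤ t^2 := by
      nlinarith [Real.sq_sqrt hX0, Real.sqrt_nonneg X]
    rw [hX, div_le_iff₀ hkb] at h2
    nlinarith
  refine ⟨fun i => x0 i + t * y i, ?_, ?_, ?_⟩
  · -- nonzero
    intro h0
    have hS1 : (∑ i, |x0 i + t * y i|) = 0 := by
      have : ∀ i, x0 i + t * y i = 0 := fun i => congrFun h0 i
      simp [this]
    have hlow : t*a - c1 ≤ ∑ i, |x0 i + t * y i| := by
      have hterm : ∀ i ∈ Finset.univ, t*|y i| - |x0 i| ≤ |x0 i + t*y i| := by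
        intro i _
        calc t*|y i| - |x0 i| = |t * y i| - |-(x0 i)| := by
              rw [abs_mul, abs_neg, abs_of_nonneg ht0]
          _ ≤ |t*y i - -(x0 i)| := abs_sub_abs_le_abs_sub _ _
          _ = |x0 i + t*y i| := by rw [sub_neg_eq_add, add_comm]
      calc t*a - c1 = ∑ i, (t*|y i| - |x0 i|) := by
            rw [Finset.sum_sub_distrib, ← Finset.mul_sum, hadef, hc1def]
        _ ≤ ∑ i, |x0 i + t*y i| := Finset.sum_le_sum hterm
    rw [hS1] at hlow
    linarith
  · -- fiber
    show A.mulVec (x0 + t • y) = A.mulVec x0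
    rw [Matrix.mulVec_add, Matrix.mulVec_smul, hAy, smul_zero, add_zero]
  · -- sparsity bound
    have hlow : t*a - c1 ≤ ∑ i, |x0 i + t * y i| := by
      have hterm : ∀ i ∈ Finset.univ, t*|y i| - |x0 i| ≤ |x0 i + t*y i| := by
        intro i _
        calc t*|y i| - |x0 i| = |t * y i| - |-(x0 i)| := by
              rw [abs_mul, abs_neg, abs_of_nonneg ht0]
          _ ≤ |t*y i - -(x0 i)| := abs_sub_abs_le_abs_sub _ _
          _ = |x0 i + t*y i| := by rw [sub_neg_eq_add, add_comm]
      calc t*a - c1 = ∑ i, (t*|y i| - |x0 i|) := by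
            rw [Finset.sum_sub_distrib, ← Finset.mul_sum, hadef, hc1def]
        _ ≤ ∑ i, |x0 i + t*y i| := Finset.sum_le_sum hterm
    have hup : (∑ i, (x0 i + t*y i)^2) ≤ 2*c2 + 2*t^2*b := by
      have hterm : ∀ i ∈ Finset.univ, (x0 i + t*y i)^2 ≤ 2*(x0 i)^2 + 2*t^2*(y i)^2 := by
        intro i _
        nlinarith [sq_nonneg (x0 i - t*y i)]
      calc (∑ i, (x0 i + t*y i)^2) ≤ ∑ i, (2*(x0 i)^2 + 2*t^2*(y i)^2) :=
            Finset.sum_le_sum hterm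
        _ = 2*c2 + 2*t^2*b := by
            rw [Finset.sum_add_distrib, ← Finset.mul_sum, ← Finset.mul_sum, hc2def, hbdef]
    have hta1 : (1:ℝ) ≤ t*a - c1 := by linarith
    have hS2pos : (0:ℝ) < ∑ i, (x0 i + t*y i)^2 := by
      rcases (Finset.sum_nonneg fun i (_ : i ∈ Finset.univ) =>
          sq_nonneg (x0 i + t*y i)).lt_or_eq with h | h
      · exact h
      · exfalso
        have hall : ∀ i ∈ Finset.univ, (x0 i + t*y i)^2 = 0 :=
          (Finset.sum_eq_zero_iff_of_nonneg fun i _ => sq_nonneg _).mp h.symm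
        have hS1 : (∑ i, |x0 i + t*y i|) = 0 := by
          apply Finset.sum_eq_zero
          intro i hi
          have := hall i hi
          have : x0 i + t*y i = 0 := by
            exact pow_eq_zero_iff (n := 2) (by norm_num) |>.mp this
          simp [this]
        rw [hS1] at hlow
        linarith
    rw [ge_iff_le, le_div_iff₀ hS2pos]
    have key1 : C * (∑ i, (x0 i + t*y i)^2) ≤ C * (2*c2 + 2*t^2*b) :=
      mul_le_mul_of_nonneg_left hup hC0
    have e1 : 2*C*(t^2*b) ≤ 2*(k'/8)*(t^2*b) := by
      apply mul_le_mul_of_nonneg_right _ (by positivity)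
      linarith
    have e2 : t^2*(k'*b) ≤ t^2*(a*a) := by
      apply mul_le_mul_of_nonneg_left _ (sq_nonneg t)
      nlinarith
    have e3 : t^2*(a*a)/2 - c1^2 ≤ (t*a - c1)^2 := by
      nlinarith [sq_nonneg (t*a - 2*c1)]
    have key2 : C * (2*c2 + 2*t^2*b) ≤ (t*a - c1)^2 := by nlinarith
    have key3 : (t*a - c1)^2 ≤ (∑ i, |x0 i + t*y i|)^2 :=
      pow_le_pow_left₀ (by linarith) hlow 2
    linarith
end

section
/- Let A ∈ ℝ^{n×p} with n < p, and let x° ∈ ℝ^p be arbitrary. Then there exists a nonzero vector x̄ ∈ ℝ^p with A x̄ = A x° and ‖x̄‖_1 / ‖x̄‖_∞ ≥ √(2/(πe)) · (p − n) / (1 + √(16 log(2p))). -/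
open Finset

namespace DenseFiber

noncomputable def sgnb (b : Bool) : ℝ := if b then 1 else -1

lemma sgnb_sq (b : Bool) : sgnb b ^ 2 = 1 := by cases b <;> simp [sgnb]

lemma sgnb_not (b : Bool) : sgnb (!b) = - sgnb b := by cases b <;> simp [sgnb]

variable {d : ℕ}

def flip (j : Fin d) (ε : Fin d → Bool) : Fin d → Bool :=
  Function.update ε j (!(ε j))

lemma flip_invol (j : Fin d) : Function.Involutive (flip j) := by
  intro ε
  funext i
  rcases eq_or_ne i j with rfl | h
  · simp [flip]
  · simp [flip, Function.update_of_ne h]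

lemma sum_flip (j : Fin d) (g : (Fin d → Bool) → ℝ) :
    ∑ ε : Fin d → Bool, g (flip j ε) = ∑ ε : Fin d → Bool, g ε :=
  Fintype.sum_bijective (flip j) (flip_invol j).bijective _ g (fun _ => rfl)

lemma flip_apply_self (j : Fin d) (ε : Fin d → Bool) : flip j ε j = !(ε j) := by
  simp [flip]

lemma flip_apply_ne (j : Fin d) (ε : Fin d → Bool) {k : Fin d} (h : k ≠ j) :
    flip j ε k = ε k := by simp [flip, Function.update_of_ne h]

/-- partial Rademacher sum -/
noncomputable def S (c : Fin d → ℝ) (K : Finset (Fin d)) (ε : Fin d → Bool) : ℝ :=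
  ∑ k ∈ K, sgnb (ε k) * c k

lemma S_flip (c : Fin d → ℝ) {K : Finset (Fin d)} {j : Fin d} (hj : j ∉ K)
    (ε : Fin d → Bool) : S c K (flip j ε) = S c K ε := by
  apply Finset.sum_congr rfl
  intro k hk
  rw [flip_apply_ne j ε (fun h => hj (h ▸ hk))]

lemma cross_zero (c : Fin d → ℝ) {K : Finset (Fin d)} {j : Fin d} (hj : j ∉ K)
    (F : ℝ → ℝ) : ∑ ε : Fin d → Bool, sgnb (ε j) * F (S c K ε) = 0 := by
  have h := sum_flip j (fun ε => sgnb (ε j) * F (S c K ε))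
  have h2 : ∀ ε : Fin d → Bool,
      sgnb (flip j ε j) * F (S c K (flip j ε)) = - (sgnb (ε j) * F (S c K ε)) := by
    intro ε
    rw [flip_apply_self, sgnb_not, S_flip c hj]
    ring
  rw [Finset.sum_congr rfl (fun ε _ => h2 ε), Finset.sum_neg_distrib] at h
  linarith

lemma card_signs : (Fintype.card (Fin d → Bool) : ℝ) = 2 ^ d := by
  simp [Fintype.card_fun]

lemma lemA (c : Fin d → ℝ) (K : Finset (Fin d)) :
    ∑ ε : Fin d → Bool, (S c K ε) ^ 2 = 2 ^ d * ∑ k ∈ K, c k ^ 2 := by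
  induction K using Finset.induction_on with
  | empty => simp [S]
  | insert j K hj ih =>
    have hterm : ∀ ε : Fin d → Bool, (S c (insert j K) ε)^2 =
        c j ^ 2 + 2 * c j * (sgnb (ε j) * S c K ε) + (S c K ε)^2 := by
      intro ε
      rw [S, Finset.sum_insert hj]
      have hs := sgnb_sq (ε j)
      show (sgnb (ε j) * c j + S c K ε)^2 = _
      linear_combination (c j ^2) * hs
    rw [Finset.sum_congr rfl (fun ε _ => hterm ε)]
    rw [Finset.sum_add_distrib, Finset.sum_add_distrib]
    have hc : ∑ ε : Fin d → Bool, sgnb (ε j) * S c K ε = 0 := by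
      simpa using cross_zero c hj id
    rw [← Finset.mul_sum, hc, Finset.sum_const, ih, Finset.sum_insert hj]
    have := @card_signs d
    simp only [Fintype.card_fun] at this
    simp only [Finset.card_univ, nsmul_eq_mul, Fintype.card_fun, Fintype.card_bool,
      Fintype.card_fin]
    push_cast
    ring

lemma lemB (c : Fin d → ℝ) (K : Finset (Fin d)) :
    ∑ ε : Fin d → Bool, (S c K ε) ^ 4 ≤ 3 * 2 ^ d * (∑ k ∈ K, c k ^ 2) ^ 2 := by
  induction K using Finset.induction_on with
  | empty => simp [S]
  | insert j K hj ih =>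
    have hterm : ∀ ε : Fin d → Bool, (S c (insert j K) ε)^4 =
        c j ^ 4 + 4 * c j ^ 3 * (sgnb (ε j) * S c K ε) + 6 * c j ^ 2 * (S c K ε)^2
          + 4 * c j * (sgnb (ε j) * (S c K ε)^3) + (S c K ε)^4 := by
      intro ε
      rw [S, Finset.sum_insert hj]
      have hs := sgnb_sq (ε j)
      show (sgnb (ε j) * c j + S c K ε)^4 = _
      linear_combination ((sgnb (ε j))^2 * (c j)^4 + (c j)^4
        + 4 * sgnb (ε j) * (c j)^3 * S c K ε + 6 * (c j)^2 * (S c K ε)^2) * hs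
    rw [Finset.sum_congr rfl (fun ε _ => hterm ε)]
    have hc1 : ∑ ε : Fin d → Bool, sgnb (ε j) * S c K ε = 0 := by
      simpa using cross_zero c hj id
    have hc3 : ∑ ε : Fin d → Bool, sgnb (ε j) * (S c K ε)^3 = 0 := by
      simpa using cross_zero c hj (fun x => x^3)
    rw [Finset.sum_add_distrib, Finset.sum_add_distrib, Finset.sum_add_distrib,
      Finset.sum_add_distrib, ← Finset.mul_sum, ← Finset.mul_sum, ← Finset.mul_sum,
      hc1, hc3, lemA, Finset.sum_const, Finset.sum_insert hj]
    simp only [Finset.card_univ, nsmul_eq_mul, Fintype.card_fun, Fintype.card_bool,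
      Fintype.card_fin, mul_zero, add_zero]
    push_cast
    have h2 : (0:ℝ) < 2 ^ d := by positivity
    nlinarith [sq_nonneg (c j ^ 2), sq_nonneg (∑ k ∈ K, c k ^ 2), ih,
      sq_nonneg (c j), Finset.sum_nonneg (fun k (_ : k ∈ K) => sq_nonneg (c k))]

lemma lemC (c : Fin d → ℝ) (K : Finset (Fin d)) :
    ∑ ε : Fin d → Bool, Real.exp (S c K ε) ≤ 2 ^ d * Real.exp ((∑ k ∈ K, c k ^ 2) / 2) := by
  induction K using Finset.induction_on with
  | empty => simp [S]
  | insert j K hj ih =>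
    have hpair : ∑ ε : Fin d → Bool, Real.exp (S c (insert j K) ε)
        = ∑ ε : Fin d → Bool, Real.cosh (c j) * Real.exp (S c K ε) := by
      have hhalf : ∀ ε : Fin d → Bool,
          Real.exp (S c (insert j K) ε) + Real.exp (S c (insert j K) (flip j ε))
            = 2 * (Real.cosh (c j) * Real.exp (S c K ε)) := by
        intro ε
        have h1 : S c (insert j K) ε = sgnb (ε j) * c j + S c K ε := by
          rw [S, Finset.sum_insert hj]; rfl
        have h2 : S c (insert j K) (flip j ε) = - (sgnb (ε j) * c j) + S c K ε := by
          rw [S, Finset.sum_insert hj, flip_apply_self, sgnb_not, neg_mul]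
          congr 1
          exact S_flip c hj ε
        rw [h1, h2, Real.exp_add, Real.exp_add]
        have : Real.exp (sgnb (ε j) * c j) + Real.exp (-(sgnb (ε j) * c j))
            = 2 * Real.cosh (c j) := by
          cases hb : ε j <;> simp [sgnb, Real.cosh_eq] <;> ring
        linear_combination Real.exp (S c K ε) * this
      have hs := sum_flip j (fun ε => Real.exp (S c (insert j K) ε))
      have : (2:ℝ) * ∑ ε : Fin d → Bool, Real.exp (S c (insert j K) ε)
          = 2 * ∑ ε : Fin d → Bool, Real.cosh (c j) * Real.exp (S c K ε) := by
        calc (2:ℝ) * ∑ ε : Fin d → Bool, Real.exp (S c (insert j K) ε)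
            = ∑ ε : Fin d → Bool, (Real.exp (S c (insert j K) ε)
                + Real.exp (S c (insert j K) (flip j ε))) := by
              rw [Finset.sum_add_distrib, hs]; ring
          _ = ∑ ε : Fin d → Bool, 2 * (Real.cosh (c j) * Real.exp (S c K ε)) := by
              exact Finset.sum_congr rfl (fun ε _ => hhalf ε)
          _ = 2 * ∑ ε : Fin d → Bool, Real.cosh (c j) * Real.exp (S c K ε) := by
              rw [Finset.mul_sum]
      linarith
    rw [hpair, ← Finset.mul_sum, Finset.sum_insert hj]
    have hcosh := Real.cosh_le_exp_half_sq (c j)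
    have hpos : (0:ℝ) < Real.cosh (c j) := Real.cosh_pos _
    calc Real.cosh (c j) * ∑ ε : Fin d → Bool, Real.exp (S c K ε)
        ≤ Real.exp (c j ^ 2 / 2) * (2 ^ d * Real.exp ((∑ k ∈ K, c k ^ 2) / 2)) := by
          apply mul_le_mul hcosh ih (Finset.sum_nonneg (fun ε _ => (Real.exp_pos _).le))
            (Real.exp_pos _).le
      _ = 2 ^ d * Real.exp ((c j ^ 2 + ∑ k ∈ K, c k ^ 2) / 2) := by
          rw [show (c j ^ 2 + ∑ k ∈ K, c k ^ 2) / 2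
            = c j ^ 2 / 2 + (∑ k ∈ K, c k ^ 2) / 2 by ring, Real.exp_add]
          ring

lemma khintchine (c : Fin d → ℝ) :
    (2:ℝ)^d * Real.sqrt (∑ k, c k ^ 2) ≤
      Real.sqrt 3 * ∑ ε : Fin d → Bool, |S c Finset.univ ε| := by
  set N : ℝ := (2:ℝ)^d with hN
  set Sq : ℝ := ∑ k, c k ^ 2 with hSq
  have hSqnn : 0 ≤ Sq := Finset.sum_nonneg (fun k _ => sq_nonneg _)
  set T1 : ℝ := ∑ ε : Fin d → Bool, |S c Finset.univ ε| with hT1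
  have hT1nn : 0 ≤ T1 := Finset.sum_nonneg (fun ε _ => abs_nonneg _)
  rcases eq_or_lt_of_le hSqnn with h0 | hSqpos
  · rw [← h0, Real.sqrt_zero, mul_zero]
    positivity
  set T2 : ℝ := ∑ ε : Fin d → Bool, (S c Finset.univ ε)^2 with hT2
  set T3 : ℝ := ∑ ε : Fin d → Bool, |S c Finset.univ ε|^3 with hT3
  set T4 : ℝ := ∑ ε : Fin d → Bool, (S c Finset.univ ε)^4 with hT4
  have hT2nn : 0 ≤ T2 := Finset.sum_nonneg (fun ε _ => sq_nonneg _)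
  have hT3nn : 0 ≤ T3 := Finset.sum_nonneg (fun ε _ => by positivity)
  have hT4nn : 0 ≤ T4 := Finset.sum_nonneg (fun ε _ => by positivity)
  have hA : T2 = N * Sq := lemA c Finset.univ
  have hB : T4 ≤ 3 * N * Sq ^ 2 := lemB c Finset.univ
  have h23 : T2 ≤ Real.sqrt T1 * Real.sqrt T3 := by
    have := Real.sum_sqrt_mul_sqrt_le (Finset.univ : Finset (Fin d → Bool))
      (f := fun ε => |S c Finset.univ ε|) (fun ε => abs_nonneg _)
      (g := fun ε => |S c Finset.univ ε|^3) (fun ε => by positivity)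
    have heq : ∀ ε : Fin d → Bool, Real.sqrt (|S c Finset.univ ε|) *
        Real.sqrt (|S c Finset.univ ε|^3) = (S c Finset.univ ε)^2 := by
      intro ε
      rw [← Real.sqrt_mul (abs_nonneg _)]
      rw [show |S c Finset.univ ε| * |S c Finset.univ ε|^3 = (|S c Finset.univ ε|^2)^2 by ring,
        sq_abs, Real.sqrt_sq (sq_nonneg _)]
    rw [hT2, hT1, hT3]
    calc ∑ ε : Fin d → Bool, S c Finset.univ ε ^ 2
        = ∑ ε : Fin d → Bool,
            Real.sqrt (|S c Finset.univ ε|) * Real.sqrt (|S c Finset.univ ε|^3) :=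
          Finset.sum_congr rfl (fun ε _ => (heq ε).symm)
      _ ≤ _ := this
  have h34 : T3 ≤ Real.sqrt T2 * Real.sqrt T4 := by
    have := Real.sum_sqrt_mul_sqrt_le (Finset.univ : Finset (Fin d → Bool))
      (f := fun ε => (S c Finset.univ ε)^2) (fun ε => sq_nonneg _)
      (g := fun ε => (S c Finset.univ ε)^4) (fun ε => by positivity)
    have heq : ∀ ε : Fin d → Bool, Real.sqrt ((S c Finset.univ ε)^2) *
        Real.sqrt ((S c Finset.univ ε)^4) = |S c Finset.univ ε|^3 := by
      intro ε
      rw [Real.sqrt_sq_eq_abs, show (S c Finset.univ ε)^4 = ((S c Finset.univ ε)^2)^2 by ring,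
        Real.sqrt_sq (sq_nonneg _), ← sq_abs]
      ring
    rw [hT3, hT2, hT4]
    calc ∑ ε : Fin d → Bool, |S c Finset.univ ε| ^ 3
        = ∑ ε : Fin d → Bool,
            Real.sqrt ((S c Finset.univ ε)^2) * Real.sqrt ((S c Finset.univ ε)^4) :=
          Finset.sum_congr rfl (fun ε _ => (heq ε).symm)
      _ ≤ _ := this
  have h22 : T2^2 ≤ T1 * T3 := by
    have := mul_self_le_mul_self hT2nn h23
    calc T2^2 = T2 * T2 := sq T2
      _ ≤ (Real.sqrt T1 * Real.sqrt T3) * (Real.sqrt T1 * Real.sqrt T3) := this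
      _ = (Real.sqrt T1 * Real.sqrt T1) * (Real.sqrt T3 * Real.sqrt T3) := by ring
      _ = T1 * T3 := by rw [Real.mul_self_sqrt hT1nn, Real.mul_self_sqrt hT3nn]
  have h33 : T3^2 ≤ T2 * T4 := by
    have := mul_self_le_mul_self hT3nn h34
    calc T3^2 = T3 * T3 := sq T3
      _ ≤ (Real.sqrt T2 * Real.sqrt T4) * (Real.sqrt T2 * Real.sqrt T4) := this
      _ = (Real.sqrt T2 * Real.sqrt T2) * (Real.sqrt T4 * Real.sqrt T4) := by ring
      _ = T2 * T4 := by rw [Real.mul_self_sqrt hT2nn, Real.mul_self_sqrt hT4nn]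
  have hNpos : (0:ℝ) < N := by positivity
  have hkey : N^2 * Sq ≤ 3 * T1^2 := by
    have hchain : T2^4 ≤ T1^2 * T2 * (3 * N * Sq^2) := by
      calc T2^4 = (T2^2)^2 := by ring
        _ ≤ (T1 * T3)^2 := by
            apply pow_le_pow_left₀ (sq_nonneg _) h22
        _ = T1^2 * T3^2 := by ring
        _ ≤ T1^2 * (T2 * T4) := by
            apply mul_le_mul_of_nonneg_left h33 (sq_nonneg _)
        _ ≤ T1^2 * (T2 * (3 * N * Sq^2)) := by
            apply mul_le_mul_of_nonneg_left _ (sq_nonneg _)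
            exact mul_le_mul_of_nonneg_left hB hT2nn
        _ = T1^2 * T2 * (3 * N * Sq^2) := by ring
    rw [hA] at hchain
    have hden : (0:ℝ) < N^2 * Sq^3 := by positivity
    have : (N^2 * Sq) * (N^2 * Sq^3) ≤ (3 * T1^2) * (N^2 * Sq^3) := by nlinarith [hchain]
    exact le_of_mul_le_mul_right this hden
  calc N * Real.sqrt Sq = Real.sqrt (N^2 * Sq) := by
        rw [Real.sqrt_mul (by positivity), Real.sqrt_sq hNpos.le]
    _ ≤ Real.sqrt (3 * T1^2) := Real.sqrt_le_sqrt hkey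
    _ = Real.sqrt 3 * T1 := by
        rw [Real.sqrt_mul (by norm_num), Real.sqrt_sq hT1nn]

lemma max_bound (p : ℕ) (hp : 0 < p) (he : (Finset.univ : Finset (Fin p)).Nonempty)
    (a : Fin p → Fin d → ℝ) (hrow : ∀ i, ∑ k, (a i k)^2 ≤ 1) :
    ∑ ε : Fin d → Bool, (Finset.univ.sup' he fun i => |S (a i) Finset.univ ε|)
      ≤ 2^d * Real.sqrt (2 * Real.log (2 * p)) := by
  set L : ℝ := Real.log (2 * p) with hLdef
  have hL : 0 < L := by
    rw [hLdef]
    apply Real.log_pos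
    have : (1:ℝ) ≤ (p:ℝ) := by exact_mod_cast hp
    linarith
  set lam : ℝ := Real.sqrt (2 * L) with hlamdef
  have hlam : 0 < lam := Real.sqrt_pos.mpr (by linarith)
  set X : Fin p → (Fin d → Bool) → ℝ := fun i ε => S (a i) Finset.univ ε with hX
  set Y : (Fin d → Bool) → ℝ :=
    fun ε => ∑ i, (Real.exp (lam * X i ε) + Real.exp (-(lam * X i ε))) with hY
  have hYpos : ∀ ε, 0 < Y ε := by
    intro ε
    apply Finset.sum_pos (fun i _ => by positivity) he
  have step1 : ∀ ε, lam * (Finset.univ.sup' he fun i => |X i ε|) ≤ Real.log (Y ε) := by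
    intro ε
    obtain ⟨i₀, -, hi₀⟩ := Finset.exists_mem_eq_sup' he (fun i => |X i ε|)
    rw [hi₀, ← Real.exp_le_exp, Real.exp_log (hYpos ε)]
    have h1 : Real.exp (lam * |X i₀ ε|)
        ≤ Real.exp (lam * X i₀ ε) + Real.exp (-(lam * X i₀ ε)) := by
      rcases abs_cases (X i₀ ε) with ⟨habs, -⟩ | ⟨habs, -⟩ <;> rw [habs]
      · nlinarith [Real.exp_pos (-(lam * X i₀ ε))]
      · rw [mul_neg, ← neg_neg (lam * X i₀ ε)] at *
        nlinarith [Real.exp_pos (-(-(lam * X i₀ ε)))]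
    refine h1.trans ?_
    exact Finset.single_le_sum (f := fun i =>
      Real.exp (lam * X i ε) + Real.exp (-(lam * X i ε)))
      (fun i _ => by positivity) (Finset.mem_univ i₀)
  have step3 : ∑ ε : Fin d → Bool, Y ε ≤ 2^d * ((2*p) * Real.exp (lam^2/2)) := by
    rw [hY, Finset.sum_comm]
    have hone : ∀ i : Fin p, ∑ ε : Fin d → Bool,
        (Real.exp (lam * X i ε) + Real.exp (-(lam * X i ε)))
          ≤ 2 * (2^d * Real.exp (lam^2/2)) := by
      intro i
      have hplus : ∀ (c : Fin d → ℝ), (∑ k, c k ^ 2 ≤ lam^2) →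
          ∑ ε : Fin d → Bool, Real.exp (S c Finset.univ ε) ≤ 2^d * Real.exp (lam^2/2) := by
        intro c hc
        refine (lemC c Finset.univ).trans ?_
        have := Real.exp_le_exp.mpr
          (by linarith : (∑ k, c k ^ 2) / 2 ≤ lam^2/2)
        nlinarith [this, pow_pos (by norm_num : (0:ℝ) < 2) d]
      have h1 : ∑ ε : Fin d → Bool, Real.exp (lam * X i ε) ≤ 2^d * Real.exp (lam^2/2) := by
        have heq : ∀ ε, lam * X i ε = S (fun k => lam * a i k) Finset.univ ε := by
          intro ε
          rw [hX]; simp only [S, Finset.mul_sum]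
          exact Finset.sum_congr rfl (fun k _ => by ring)
        rw [Finset.sum_congr rfl (fun ε _ => by rw [heq ε])]
        apply hplus
        have : ∑ k, (lam * a i k)^2 = lam^2 * ∑ k, (a i k)^2 := by
          rw [Finset.mul_sum]; exact Finset.sum_congr rfl (fun k _ => by ring)
        rw [this]
        nlinarith [hrow i, sq_nonneg lam]
      have h2 : ∑ ε : Fin d → Bool, Real.exp (-(lam * X i ε)) ≤ 2^d * Real.exp (lam^2/2) := by
        have heq : ∀ ε, -(lam * X i ε) = S (fun k => -lam * a i k) Finset.univ ε := by
          intro ε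
          rw [hX]; simp only [S, Finset.mul_sum, neg_mul, Finset.sum_neg_distrib]
          rw [← Finset.sum_neg_distrib]
          exact Finset.sum_congr rfl (fun k _ => by ring)
        rw [Finset.sum_congr rfl (fun ε _ => by rw [heq ε])]
        apply hplus
        have : ∑ k, (-lam * a i k)^2 = lam^2 * ∑ k, (a i k)^2 := by
          rw [Finset.mul_sum]; exact Finset.sum_congr rfl (fun k _ => by ring)
        rw [this]
        nlinarith [hrow i, sq_nonneg lam]
      calc ∑ ε : Fin d → Bool, (Real.exp (lam * X i ε) + Real.exp (-(lam * X i ε)))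
          = (∑ ε : Fin d → Bool, Real.exp (lam * X i ε))
            + ∑ ε : Fin d → Bool, Real.exp (-(lam * X i ε)) := Finset.sum_add_distrib
        _ ≤ 2 * (2^d * Real.exp (lam^2/2)) := by linarith
    calc ∑ i, ∑ ε : Fin d → Bool, (Real.exp (lam * X i ε) + Real.exp (-(lam * X i ε)))
        ≤ ∑ i : Fin p, 2 * (2^d * Real.exp (lam^2/2)) :=
          Finset.sum_le_sum (fun i _ => hone i)
      _ = 2^d * ((2*p) * Real.exp (lam^2/2)) := by
          rw [Finset.sum_const, Finset.card_univ, Fintype.card_fin, nsmul_eq_mul]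
          ring
  -- Jensen via AM-GM
  have hNcard : (Fintype.card (Fin d → Bool) : ℝ) = 2^d := card_signs
  have step2 : ∑ ε : Fin d → Bool, Real.log (Y ε)
      ≤ 2^d * Real.log ((∑ ε : Fin d → Bool, Y ε) / 2^d) := by
    set w : (Fin d → Bool) → ℝ := fun _ => 1 / 2^d with hw
    have hwsum : ∑ ε : Fin d → Bool, w ε = 1 := by
      rw [hw, Finset.sum_const, Finset.card_univ, nsmul_eq_mul, hNcard]
      field_simp
    have h := Real.geom_mean_le_arith_mean_weighted Finset.univ w Y
      (fun ε _ => by positivity) hwsum (fun ε _ => (hYpos ε).le)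
    have hprodpos : 0 < ∏ ε : Fin d → Bool, Y ε ^ w ε := by
      apply Finset.prod_pos
      intro ε _
      exact Real.rpow_pos_of_pos (hYpos ε) _
    have hlog := Real.log_le_log hprodpos h
    rw [Real.log_prod (fun ε _ => (Real.rpow_pos_of_pos (hYpos ε) _).ne')] at hlog
    have hlog2 : ∑ ε : Fin d → Bool, w ε * Real.log (Y ε)
        ≤ Real.log (∑ ε : Fin d → Bool, w ε * Y ε) := by
      refine le_trans (le_of_eq ?_) hlog
      exact Finset.sum_congr rfl (fun ε _ => (Real.log_rpow (hYpos ε) _).symm)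
    have hsumw : ∑ ε : Fin d → Bool, w ε * Y ε = (∑ ε : Fin d → Bool, Y ε) / 2^d := by
      rw [hw, Finset.sum_div]
      exact Finset.sum_congr rfl (fun ε _ => by ring)
    rw [hsumw] at hlog2
    have h2d : (0:ℝ) < 2^d := by positivity
    have : ∑ ε : Fin d → Bool, w ε * Real.log (Y ε)
        = (∑ ε : Fin d → Bool, Real.log (Y ε)) / 2^d := by
      rw [hw, Finset.sum_div]
      exact Finset.sum_congr rfl (fun ε _ => by ring)
    rw [this, div_le_iff₀ h2d] at hlog2
    linarith [hlog2]
  have hsum : ∑ ε : Fin d → Bool,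
      lam * (Finset.univ.sup' he fun i => |X i ε|) ≤ 2^d * (2 * L) := by
    calc ∑ ε : Fin d → Bool, lam * (Finset.univ.sup' he fun i => |X i ε|)
        ≤ ∑ ε : Fin d → Bool, Real.log (Y ε) := Finset.sum_le_sum (fun ε _ => step1 ε)
      _ ≤ 2^d * Real.log ((∑ ε : Fin d → Bool, Y ε) / 2^d) := step2
      _ ≤ 2^d * (2 * L) := by
          have h2d : (0:ℝ) < 2^d := by positivity
          have hYsumpos : 0 < ∑ ε : Fin d → Bool, Y ε :=
            Finset.sum_pos (fun ε _ => hYpos ε) Finset.univ_nonempty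
          have harg : (∑ ε : Fin d → Bool, Y ε) / 2^d ≤ (2*p) * Real.exp (lam^2/2) := by
            rw [div_le_iff₀ h2d]
            calc (∑ ε : Fin d → Bool, Y ε) ≤ 2^d * ((2*p) * Real.exp (lam^2/2)) := step3
              _ = 2 * ↑p * Real.exp (lam ^ 2 / 2) * 2 ^ d := by ring
          have hlog := Real.log_le_log (by positivity) harg
          have hexp : Real.log ((2*p) * Real.exp (lam^2/2)) = L + lam^2/2 := by
            rw [Real.log_mul (by positivity) (Real.exp_ne_zero _), Real.log_exp, hLdef]
          have hlamsq : lam^2 = 2 * L := by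
            rw [hlamdef, Real.sq_sqrt (by linarith : (0:ℝ) ≤ 2 * L)]
          rw [hexp, hlamsq] at hlog
          have : Real.log ((∑ ε : Fin d → Bool, Y ε) / 2^d) ≤ 2 * L := by linarith
          nlinarith [this, h2d]
  have hfinal : lam * ∑ ε : Fin d → Bool, (Finset.univ.sup' he fun i => |X i ε|)
      ≤ 2^d * (2 * L) := by
    rw [Finset.mul_sum]
    exact hsum
  have hlam2 : 2^d * (2 * L) = lam * (2^d * lam) := by
    have : lam * lam = 2 * L := by
      rw [hlamdef]; exact Real.mul_self_sqrt (by linarith)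
    nlinarith [this]
  rw [hlam2] at hfinal
  have := le_of_mul_le_mul_left hfinal hlam
  simpa [hX] using this

lemma core (p : ℕ) (hp : 0 < p) (he : (Finset.univ : Finset (Fin p)).Nonempty)
    (a : Fin p → Fin d → ℝ) (hrow : ∀ i, ∑ k, (a i k)^2 ≤ 1)
    (B : ℝ) (hB : 0 ≤ B)
    (hgap : B * Real.sqrt (2 * Real.log (2*p)) * Real.sqrt 3 < ∑ i, ∑ k, (a i k)^2) :
    ∃ ε : Fin d → Bool,
      B * (Finset.univ.sup' he fun i => |S (a i) Finset.univ ε|)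
        < ∑ i, |S (a i) Finset.univ ε| := by
  by_contra hcon
  push_neg at hcon
  set N : ℝ := (2:ℝ)^d with hN
  have hNpos : (0:ℝ) < N := by positivity
  set s3 : ℝ := Real.sqrt 3 with hs3
  have hs3pos : (0:ℝ) < s3 := by rw [hs3]; positivity
  set D : ℝ := ∑ i, ∑ k, (a i k)^2 with hD
  set tot : ℝ := ∑ ε : Fin d → Bool, ∑ i, |S (a i) Finset.univ ε| with htot
  have hlow : N * D ≤ s3 * tot := by
    rw [htot, Finset.sum_comm, hD, Finset.mul_sum, Finset.mul_sum]
    apply Finset.sum_le_sum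
    intro i _
    have hk := khintchine (a i)
    have hpos0 : (0:ℝ) ≤ ∑ k, (a i k)^2 := Finset.sum_nonneg fun k _ => sq_nonneg _
    have hsq : ∑ k, (a i k)^2 ≤ Real.sqrt (∑ k, (a i k)^2) := by
      rw [Real.le_sqrt hpos0 hpos0]
      nlinarith [hrow i, hpos0]
    nlinarith [mul_le_mul_of_nonneg_left hsq hNpos.le, hk]
  have hup : tot ≤ B * (N * Real.sqrt (2 * Real.log (2*p))) := by
    rw [htot]
    calc ∑ ε : Fin d → Bool, ∑ i, |S (a i) Finset.univ ε|
        ≤ ∑ ε : Fin d → Bool,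
            B * (Finset.univ.sup' he fun i => |S (a i) Finset.univ ε|) :=
          Finset.sum_le_sum (fun ε _ => hcon ε)
      _ = B * ∑ ε : Fin d → Bool, (Finset.univ.sup' he fun i => |S (a i) Finset.univ ε|) := by
          rw [Finset.mul_sum]
      _ ≤ B * (N * Real.sqrt (2 * Real.log (2*p))) := by
          apply mul_le_mul_of_nonneg_left _ hB
          exact max_bound p hp he a hrow
  have h2 : N * D ≤ N * (B * Real.sqrt (2 * Real.log (2*p)) * s3) := by
    calc N * D ≤ s3 * tot := hlow
      _ ≤ s3 * (B * (N * Real.sqrt (2 * Real.log (2*p)))) :=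
          mul_le_mul_of_nonneg_left hup hs3pos.le
      _ = N * (B * Real.sqrt (2 * Real.log (2*p)) * s3) := by ring
  have h3 := le_of_mul_le_mul_left h2 hNpos
  linarith


lemma assemble {d : ℕ} (n p : ℕ) (hp : 0 < p) (A : Matrix (Fin n) (Fin p) ℝ)
    (x0 : Fin p → ℝ) (a : Fin p → Fin d → ℝ)
    (hrow : ∀ i, ∑ k, (a i k)^2 ≤ 1)
    (hmem : ∀ (c : Fin d → ℝ), A.mulVec (fun i => ∑ k, c k * a i k) = 0)
    (B : ℝ) (hB : 0 ≤ B)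
    (hgap : B * Real.sqrt (2 * Real.log (2*p)) * Real.sqrt 3 < ∑ i, ∑ k, (a i k)^2) :
    ∃ xb : Fin p → ℝ, xb ≠ 0 ∧ A.mulVec xb = A.mulVec x0 ∧
      (∑ i, |xb i|) / (⨆ i, |xb i|) ≥ B := by
  haveI : NeZero p := ⟨hp.ne'⟩
  have he : (Finset.univ : Finset (Fin p)).Nonempty := Finset.univ_nonempty
  obtain ⟨ε, hε⟩ := core p hp he a hrow B hB hgap
  set v : Fin p → ℝ := fun i => S (a i) Finset.univ ε with hvdef
  have hεv : B * (Finset.univ.sup' he fun i => |v i|) < ∑ i, |v i| := hε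
  set Mv : ℝ := Finset.univ.sup' he (fun i => |v i|) with hMvdef
  set Sv : ℝ := ∑ i, |v i| with hSvdef
  have hvle : ∀ i, |v i| ≤ Mv := by
    intro i
    rw [hMvdef]
    exact Finset.le_sup' (fun i => |v i|) (Finset.mem_univ i)
  obtain ⟨i1, -, hi1⟩ := Finset.exists_mem_eq_sup' he (fun i => |v i|)
  have hMv1 : Mv = |v i1| := by rw [hMvdef]; exact hi1
  have hMvnn : 0 ≤ Mv := hMv1 ▸ abs_nonneg _
  have hSvpos : 0 < Sv := lt_of_le_of_lt (by positivity) hεv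
  have hSvle : Sv ≤ (p:ℝ) * Mv := by
    rw [hSvdef]
    calc ∑ i, |v i| ≤ ∑ _i : Fin p, Mv := Finset.sum_le_sum (fun i _ => hvle i)
      _ = (p:ℝ) * Mv := by rw [Finset.sum_const, Finset.card_univ, Fintype.card_fin]; ring
  have hMvpos : 0 < Mv := by
    rcases lt_or_ge 0 Mv with h | h
    · exact h
    · exfalso
      have : (p:ℝ) * Mv ≤ 0 := mul_nonpos_of_nonneg_of_nonpos (by positivity) h
      linarith
  set δ : ℝ := Sv - B * Mv with hδdef
  have hδ : 0 < δ := by rw [hδdef]; linarith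
  set Q : ℝ := ∑ i, |x0 i| with hQdef
  have hQnn : 0 ≤ Q := Finset.sum_nonneg (fun i _ => abs_nonneg _)
  set t : ℝ := Q * (1 + B) / δ + (Q + 1) / Mv with htdef
  have ht0 : 0 ≤ t := by rw [htdef]; positivity
  have ht1 : Q * (1 + B) ≤ t * δ := by
    have h1 : Q * (1 + B) / δ ≤ t := by
      rw [htdef]
      have : 0 ≤ (Q + 1) / Mv := by positivity
      linarith
    calc Q * (1 + B) = (Q * (1 + B) / δ) * δ := by field_simp
      _ ≤ t * δ := mul_le_mul_of_nonneg_right h1 hδ.le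
  have ht2 : Q + 1 ≤ t * Mv := by
    have h1 : (Q + 1) / Mv ≤ t := by
      rw [htdef]
      have : 0 ≤ Q * (1 + B) / δ := by positivity
      linarith
    calc Q + 1 = ((Q + 1) / Mv) * Mv := by field_simp
      _ ≤ t * Mv := mul_le_mul_of_nonneg_right h1 hMvpos.le
  have hx0le : ∀ i, |x0 i| ≤ Q := by
    intro i
    rw [hQdef]
    exact Finset.single_le_sum (f := fun i => |x0 i|) (fun i _ => abs_nonneg _)
      (Finset.mem_univ i)
  refine ⟨fun i => x0 i + t * v i, ?_, ?_, ?_⟩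
  · -- nonzero
    intro hzero
    have h1 : x0 i1 + t * v i1 = 0 := congrFun hzero i1
    have h4 : t * v i1 = -(x0 i1) := by linarith
    have h3 : t * |v i1| = |x0 i1| := by
      rw [← abs_of_nonneg ht0, ← abs_mul, h4, abs_neg]
    rw [← hMv1] at h3
    have := hx0le i1
    linarith
  · -- kernel condition
    have hker : A.mulVec v = 0 := hmem (fun k => sgnb (ε k))
    have heq : (fun i => x0 i + t * v i) = x0 + t • v := by
      funext i
      simp [smul_eq_mul]
    rw [heq, Matrix.mulVec_add, Matrix.mulVec_smul, hker]
    simp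
  · -- ratio bound
    rw [ge_iff_le]
    have hub : ∀ i, |x0 i + t * v i| ≤ t * Mv + Q := by
      intro i
      have h1 : |x0 i + t * v i| ≤ |x0 i| + |t * v i| := abs_add_le _ _
      have h2 : |t * v i| = t * |v i| := by rw [abs_mul, abs_of_nonneg ht0]
      have h3 : t * |v i| ≤ t * Mv := mul_le_mul_of_nonneg_left (hvle i) ht0
      have := hx0le i
      linarith
    have hper : ∀ i, t * |v i| - |x0 i| ≤ |x0 i + t * v i| := by
      intro i
      have h1 : |t * v i| ≤ |x0 i + t * v i| + |x0 i| := by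
        have h := abs_add_le (x0 i + t * v i) (-(x0 i))
        have heq : x0 i + t * v i + -(x0 i) = t * v i := by ring
        rw [heq, abs_neg] at h
        exact h
      have h2 : |t * v i| = t * |v i| := by rw [abs_mul, abs_of_nonneg ht0]
      linarith
    have hlb : t * Sv - Q ≤ ∑ i, |x0 i + t * v i| := by
      calc t * Sv - Q = ∑ i, (t * |v i| - |x0 i|) := by
            rw [Finset.sum_sub_distrib, ← Finset.mul_sum, hSvdef, hQdef]
        _ ≤ ∑ i, |x0 i + t * v i| := Finset.sum_le_sum (fun i _ => hper i)
    have hxb1 : 1 ≤ |x0 i1 + t * v i1| := by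
      have h1 := hper i1
      rw [← hMv1] at h1
      have := hx0le i1
      linarith
    have hbdd : BddAbove (Set.range fun i => |x0 i + t * v i|) :=
      Set.Finite.bddAbove (Set.finite_range _)
    have hTlb : |x0 i1 + t * v i1| ≤ ⨆ i, |x0 i + t * v i| := le_ciSup hbdd i1
    have hTpos : (0:ℝ) < ⨆ i, |x0 i + t * v i| := by linarith
    have hTub : (⨆ i, |x0 i + t * v i|) ≤ t * Mv + Q := ciSup_le hub
    rw [le_div_iff₀ hTpos]
    have hstep : B * (t * Mv + Q) ≤ t * Sv - Q := by
      have hexp : t * δ = t * Sv - t * (B * Mv) := by rw [hδdef]; ring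
      nlinarith [ht1, hexp]
    calc B * (⨆ i, |x0 i + t * v i|) ≤ B * (t * Mv + Q) :=
          mul_le_mul_of_nonneg_left hTub hB
      _ ≤ t * Sv - Q := hstep
      _ ≤ ∑ i, |x0 i + t * v i| := hlb

end DenseFiber

theorem exists_dense_in_fiber_sInf (n p : ℕ) (hnp : n < p) (A : Matrix (Fin n) (Fin p) ℝ)
    (x0 : Fin p → ℝ) :
    ∃ xb : Fin p → ℝ, xb ≠ 0 ∧ A.mulVec xb = A.mulVec x0 ∧
      (∑ i, |xb i|) / (⨆ i, |xb i|) ≥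
        Real.sqrt (2 / (Real.pi * Real.exp 1)) * ((p : ℝ) - n) /
          (1 + Real.sqrt (16 * Real.log (2 * p))) := by
  have hp : 0 < p := lt_of_le_of_lt (Nat.zero_le n) hnp
  -- linear algebra part
  let E := EuclideanSpace ℝ (Fin p)
  let L' : E →ₗ[ℝ] (Fin n → ℝ) := A.mulVecLin ∘ₗ (EuclideanSpace.equiv (Fin p) ℝ).toLinearMap
  let K := LinearMap.ker L'
  have hd : p - n ≤ Module.finrank ℝ K := by
    show p - n ≤ Module.finrank ℝ (LinearMap.ker L')
    have h1 := L'.finrank_range_add_finrank_ker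
    have h2 : Module.finrank ℝ (LinearMap.range L') ≤ n := by
      simpa using Submodule.finrank_le (LinearMap.range L')
    have h3 : Module.finrank ℝ E = p := by simp [E, finrank_euclideanSpace]
    omega
  let d := Module.finrank ℝ K
  let b := stdOrthonormalBasis ℝ K
  let u : Fin d → E := fun k => (b k : E)
  have hu : Orthonormal ℝ u := b.orthonormal.comp_linearIsometry K.subtypeₗᵢ
  have hbessel : ∀ i, ∑ k, (u k i)^2 ≤ 1 := by
    intro i
    have h := hu.sum_inner_products_le (s := Finset.univ) (EuclideanSpace.single i (1:ℝ))
    simpa [EuclideanSpace.inner_single_right, EuclideanSpace.norm_single, sq_abs] using h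
  have hnorm : ∀ k, ∑ i, (u k i)^2 = 1 := by
    intro k
    have h : ‖u k‖ = 1 := hu.1 k
    have h2 := EuclideanSpace.norm_eq (u k)
    rw [h] at h2
    have h3 : Real.sqrt (∑ i, ‖u k i‖^2) = 1 := h2.symm
    have := Real.sqrt_eq_one.mp h3
    simpa [sq_abs] using this
  have hmem : ∀ (c : Fin d → ℝ), A.mulVec (fun i => ∑ k, c k * u k i) = 0 := by
    intro c
    have hK : (∑ k, c k • u k) ∈ K := by
      apply Submodule.sum_mem
      intro k _
      exact Submodule.smul_mem _ _ (b k).2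
    have hL0 : L' (∑ k, c k • u k) = 0 := hK
    have heq : (fun i => ∑ k, c k * u k i) = (EuclideanSpace.equiv (Fin p) ℝ) (∑ k, c k • u k) := by
      funext i
      simp [EuclideanSpace.equiv, WithLp.ofLp_sum, PiLp.smul_apply]
      exact Finset.sum_congr rfl (fun k _ => rfl)
    rw [heq]
    exact hL0
  -- abstract coordinates
  have main : ∀ (dd : ℕ) (a : Fin p → Fin dd → ℝ),
      (∀ i, ∑ k, (a i k)^2 ≤ 1) →
      (∀ (c : Fin dd → ℝ), A.mulVec (fun i => ∑ k, c k * a i k) = 0) →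
      ((p:ℝ) - n ≤ ∑ i, ∑ k, (a i k)^2) →
      ∃ xb : Fin p → ℝ, xb ≠ 0 ∧ A.mulVec xb = A.mulVec x0 ∧
        (∑ i, |xb i|) / (⨆ i, |xb i|) ≥
          Real.sqrt (2 / (Real.pi * Real.exp 1)) * ((p : ℝ) - n) /
            (1 + Real.sqrt (16 * Real.log (2 * p))) := by
    intro dd a hrow hmem' hD
    set L : ℝ := Real.log (2 * (p:ℝ)) with hLdef
    have hL : 0 < L := by
      rw [hLdef]
      apply Real.log_pos
      have : (1:ℝ) ≤ (p:ℝ) := by exact_mod_cast hp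
      linarith
    have hsL : 0 < Real.sqrt L := Real.sqrt_pos.2 hL
    set c0 : ℝ := Real.sqrt (2 / (Real.pi * Real.exp 1)) with hc0def
    have hc0nn : 0 ≤ c0 := Real.sqrt_nonneg _
    set B : ℝ := c0 * ((p : ℝ) - n) / (1 + Real.sqrt (16 * L)) with hBdef
    have hpn : (0:ℝ) < (p:ℝ) - n := by
      have : (n:ℝ) < (p:ℝ) := by exact_mod_cast hnp
      linarith
    have hden : (0:ℝ) < 1 + Real.sqrt (16 * L) := by positivity
    have hB : 0 ≤ B := by rw [hBdef]; positivity
    have hgap : B * Real.sqrt (2 * L) * Real.sqrt 3 < ∑ i, ∑ k, (a i k)^2 := by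
      have e1 : Real.sqrt (2*L) * Real.sqrt 3 = Real.sqrt 6 * Real.sqrt L := by
        rw [← Real.sqrt_mul (by linarith : (0:ℝ) ≤ 2*L) 3, ← Real.sqrt_mul (by norm_num) L]
        congr 1
        ring
      have e2 : Real.sqrt (16 * L) = 4 * Real.sqrt L := by
        rw [Real.sqrt_mul (by norm_num) L, show (16:ℝ) = 4^2 by norm_num,
          Real.sqrt_sq (by norm_num : (0:ℝ) ≤ 4)]
      have hc01 : c0 ≤ 1 := by
        rw [hc0def, show (1:ℝ) = Real.sqrt 1 from Real.sqrt_one.symm]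
        apply Real.sqrt_le_sqrt
        have hpi := Real.pi_gt_three
        have hexp : (2:ℝ) ≤ Real.exp 1 := by nlinarith [Real.add_one_le_exp 1]
        rw [show Real.sqrt 1 = 1 from Real.sqrt_one, div_le_one (by nlinarith)]
        nlinarith
      have h6 : Real.sqrt 6 ≤ 4 := by
        rw [show (4:ℝ) = Real.sqrt 16 by
          rw [show (16:ℝ) = 4^2 by norm_num, Real.sqrt_sq (by norm_num : (0:ℝ) ≤ 4)]]
        exact Real.sqrt_le_sqrt (by norm_num)
      have hc6 : c0 * Real.sqrt 6 ≤ 4 := by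
        nlinarith [Real.sqrt_nonneg (6:ℝ)]
      have hden4 : (0:ℝ) < 1 + 4 * Real.sqrt L := by positivity
      have key : B * Real.sqrt (2*L) * Real.sqrt 3 < (p:ℝ) - n := by
        rw [mul_assoc, e1, hBdef, e2, div_mul_eq_mul_div, div_lt_iff₀ hden4]
        have hh : c0 * ((p:ℝ) - n) * (Real.sqrt 6 * Real.sqrt L)
            ≤ 4 * ((p:ℝ) - n) * Real.sqrt L := by
          have hm : (0:ℝ) ≤ ((p:ℝ) - n) * Real.sqrt L := mul_nonneg hpn.le hsL.le
          have h := mul_le_mul_of_nonneg_right hc6 hm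
          nlinarith [h]
        have hh2 : 4 * ((p:ℝ) - n) * Real.sqrt L < ((p:ℝ) - n) * (1 + 4 * Real.sqrt L) := by
          nlinarith [hpn, hsL]
        linarith
      linarith
    exact DenseFiber.assemble n p hp A x0 a hrow hmem' B hB hgap
  apply main d (fun i k => u k i) hbessel hmem
  have hD : ∑ i, ∑ k, ((fun i k => u k i) i k : ℝ)^2 = (d:ℝ) := by
    rw [Finset.sum_comm]
    rw [Finset.sum_congr rfl (fun k _ => hnorm k)]
    simp
  rw [hD]
  have hdn : ((p - n : ℕ) : ℝ) ≤ (d:ℝ) := by exact_mod_cast hd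
  rw [Nat.cast_sub hnp.le] at hdn
  exact hdn
end

section
/- Let f : [0,∞) → ℝ be four-times differentiable with f(0) ≥ 0, f′(0) ≥ 0, and f⁗(u) > 0 for all u > 0. Then the function u ↦ f(u)/u² is strictly convex on (0,∞). -/
open Set

theorem div_sq_strictConvex (f : ℝ → ℝ)
    (hf : DifferentiableOn ℝ f (Ici 0))
    (hf1 : DifferentiableOn ℝ (derivWithin f (Ici 0)) (Ici 0))
    (hf2 : DifferentiableOn ℝ (derivWithin (derivWithin f (Ici 0)) (Ici 0)) (Ici 0))
    (hf3 : DifferentiableOn ℝ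
      (derivWithin (derivWithin (derivWithin f (Ici 0)) (Ici 0)) (Ici 0)) (Ici 0))
    (h0 : 0 ≤ f 0)
    (h0' : 0 ≤ derivWithin f (Ici 0) 0)
    (h4 : ∀ u > 0,
      0 < derivWithin (derivWithin (derivWithin (derivWithin f (Ici 0)) (Ici 0)) (Ici 0))
        (Ici 0) u) :
    StrictConvexOn ℝ (Ioi 0) (fun u => f u / u ^ 2) := by
  set F1 := derivWithin f (Ici 0) with hF1def
  set F2 := derivWithin F1 (Ici 0) with hF2def
  set F3 := derivWithin F2 (Ici 0) with hF3def
  set F4 := derivWithin F3 (Ici 0) with hF4def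
  -- derivatives at interior points
  have key : ∀ (g : ℝ → ℝ), DifferentiableOn ℝ g (Ici 0) →
      ∀ x : ℝ, 0 < x → HasDerivAt g (derivWithin g (Ici 0) x) x := by
    intro g hg x hx
    have hmem : Ici (0:ℝ) ∈ nhds x := Ici_mem_nhds hx
    have hd : DifferentiableAt ℝ g x := (hg x hx.le).differentiableAt hmem
    rw [derivWithin_of_mem_nhds hmem]
    exact hd.hasDerivAt
  have hdf : ∀ x : ℝ, 0 < x → HasDerivAt f (F1 x) x := key f hf
  have hdf1 : ∀ x : ℝ, 0 < x → HasDerivAt F1 (F2 x) x := key F1 hf1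
  have hdf2 : ∀ x : ℝ, 0 < x → HasDerivAt F2 (F3 x) x := key F2 hf2
  have hdf3 : ∀ x : ℝ, 0 < x → HasDerivAt F3 (F4 x) x := key F3 hf3
  set p : ℝ → ℝ := fun u => u ^ 2 * F3 u - 2 * u * F2 u + 2 * F1 u with hpdef
  set g : ℝ → ℝ := fun u => u ^ 2 * F2 u - 4 * u * F1 u + 6 * f u with hgdef
  have hp' : ∀ x : ℝ, 0 < x → HasDerivAt p (x ^ 2 * F4 x) x := by
    intro x hx
    have h1 := ((hasDerivAt_pow 2 x).mul (hdf3 x hx)).sub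
      (((hasDerivAt_id x).const_mul 2).mul (hdf2 x hx))
    have h2 := h1.add ((hdf1 x hx).const_mul 2)
    refine (h2).congr_deriv ?_
    simp only [id_eq]
    push_cast
    ring
  have hg' : ∀ x : ℝ, 0 < x → HasDerivAt g (p x) x := by
    intro x hx
    have h1 := ((hasDerivAt_pow 2 x).mul (hdf2 x hx)).sub
      (((hasDerivAt_id x).const_mul 4).mul (hdf1 x hx))
    have h2 := h1.add ((hdf x hx).const_mul 6)
    refine (h2).congr_deriv ?_
    simp only [id_eq]
    push_cast
    ring
  have hpc : ContinuousOn p (Ici 0) := by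
    apply ContinuousOn.add
    · exact ((continuousOn_id.pow 2).mul hf3.continuousOn).sub
        ((continuousOn_const.mul continuousOn_id).mul hf2.continuousOn)
    · exact continuousOn_const.mul hf1.continuousOn
  have hgc : ContinuousOn g (Ici 0) := by
    apply ContinuousOn.add
    · exact ((continuousOn_id.pow 2).mul hf2.continuousOn).sub
        ((continuousOn_const.mul continuousOn_id).mul hf1.continuousOn)
    · exact continuousOn_const.mul hf.continuousOn
  have hpmono : StrictMonoOn p (Ici 0) := by
    apply strictMonoOn_of_deriv_pos (convex_Ici 0) hpc
    intro x hx
    rw [interior_Ici] at hx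
    rw [(hp' x hx).deriv]
    exact mul_pos (pow_pos hx 2) (h4 x hx)
  have hppos : ∀ x : ℝ, 0 < x → 0 < p x := by
    intro x hx
    have h1 : p 0 < p x := hpmono self_mem_Ici hx.le hx
    have h2 : p 0 = 2 * F1 0 := by simp [hpdef]
    calc 0 ≤ 2 * F1 0 := by linarith
      _ = p 0 := h2.symm
      _ < p x := h1
  have hgmono : StrictMonoOn g (Ici 0) := by
    apply strictMonoOn_of_deriv_pos (convex_Ici 0) hgc
    intro x hx
    rw [interior_Ici] at hx
    rw [(hg' x hx).deriv]
    exact hppos x hx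
  have hgpos : ∀ x : ℝ, 0 < x → 0 < g x := by
    intro x hx
    have h1 : g 0 < g x := hgmono self_mem_Ici hx.le hx
    have h2 : g 0 = 6 * f 0 := by simp [hgdef]
    calc 0 ≤ 6 * f 0 := by linarith
      _ = g 0 := h2.symm
      _ < g x := h1
  -- now the main function
  set h : ℝ → ℝ := fun u => f u / u ^ 2 with hhdef
  set q : ℝ → ℝ := fun u => (F1 u * u ^ 2 - f u * (2 * u)) / (u ^ 2) ^ 2 with hqdef
  have hh' : ∀ x : ℝ, 0 < x → HasDerivAt h (q x) x := by
    intro x hx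
    have hne : (x : ℝ) ^ 2 ≠ 0 := pow_ne_zero 2 hx.ne'
    have := (hdf x hx).div (hasDerivAt_pow 2 x) hne
    refine (this).congr_deriv ?_
    simp only [hqdef]
    norm_num
  have hq' : ∀ x : ℝ, 0 < x → HasDerivAt q (g x / x ^ 4) x := by
    intro x hx
    have hne : ((x : ℝ) ^ 2) ^ 2 ≠ 0 := pow_ne_zero 2 (pow_ne_zero 2 hx.ne')
    have hnum : HasDerivAt (fun u => F1 u * u ^ 2 - f u * (2 * u))
        (F2 x * x ^ 2 + F1 x * (2 * x) - (F1 x * (2 * x) + f x * 2)) x := by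
      have h1 := (hdf1 x hx).mul (hasDerivAt_pow 2 x)
      have h2 := (hdf x hx).mul ((hasDerivAt_id x).const_mul 2)
      refine (h1.sub h2).congr_deriv ?_
      simp only [id_eq]
      push_cast
      ring
    have hden := (hasDerivAt_pow 2 x).pow 2
    have := hnum.div hden hne
    refine (this).congr_deriv ?_
    have hxne : (x : ℝ) ≠ 0 := hx.ne'
    simp only [hgdef, Pi.pow_apply]
    field_simp [hgdef]
    ring
  have hderiv2 : ∀ x ∈ interior (Ioi (0:ℝ)), 0 < (deriv^[2] h) x := by
    intro x hx
    rw [interior_Ioi] at hx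
    have heq : deriv h =ᶠ[nhds x] q := by
      filter_upwards [Ioi_mem_nhds hx] with y hy
      exact (hh' y hy).deriv
    have : deriv (deriv h) x = deriv q x := Filter.EventuallyEq.deriv_eq heq
    simp only [Function.iterate_succ, Function.iterate_zero, Function.comp_apply, id]
    rw [this, (hq' x hx).deriv]
    exact div_pos (hgpos x hx) (pow_pos hx 4)
  have hhc : ContinuousOn h (Ioi 0) := by
    apply ContinuousOn.div (hf.continuousOn.mono Ioi_subset_Ici_self)
      (continuousOn_id.pow 2)
    intro x hx
    exact pow_ne_zero 2 (ne_of_gt hx)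
  exact strictConvexOn_of_deriv2_pos (convex_Ioi 0) hhc hderiv2
end
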